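/- Let q be a positive integer. For any reals φ₁,…,φ_N and non-negative reals a₁,…,a_N, and any T > 0 and real T₀, (1/(2T)) ∫_{|t − T₀| ≤ T} |∑_{n=1}^N a_n e^{i t φ_n}|^{2q} dt can be bounded below: there is a constant c_q > 0 (depending only on q) with c_q (∑_{n=1}^N a_n²)^q ≤ (3/(2T)) ∫_{|t| ≤ T} |∑_{n=1}^N a_n e^{i t φ_n}|^{2q} dt, hence also the lower bound holds for the integral over any interval containing [−T, T]. -/

import Mathlib

open MeasureTheory Complex

theorem aux_jensen (q : ℕ) {T : ℝ} (hT : 0 < T) {g : ℝ → ℝ} (hg : Continuous g)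
    (hg0 : ∀ t, 0 ≤ g t) :
    ((2 * T)⁻¹ * ∫ t in (-T)..T, g t) ^ q ≤ (2 * T)⁻¹ * ∫ t in (-T)..T, (g t) ^ q := by
  set μ : Measure ℝ := volume.restrict (Set.Ioc (-T) T) with hμ
  have hμuniv : μ Set.univ = ENNReal.ofReal (2 * T) := by
    simp [hμ, Real.volume_Ioc]
    ring_nf
    rw [ENNReal.ofReal_mul' (by norm_num), ENNReal.ofReal_ofNat]
  haveI : IsFiniteMeasure μ := ⟨by rw [hμuniv]; exact ENNReal.ofReal_lt_top⟩
  haveI : NeZero μ := ⟨by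
    rw [← MeasureTheory.Measure.measure_univ_ne_zero, hμuniv]
    simp [ENNReal.ofReal_eq_zero]
    positivity⟩
  have hfi : Integrable g μ := hg.integrableOn_Ioc
  have hgi : Integrable ((fun x : ℝ => x ^ q) ∘ g) μ := (hg.pow q).integrableOn_Ioc
  have hfs : ∀ᵐ x ∂μ, g x ∈ Set.Ici (0:ℝ) := Filter.Eventually.of_forall fun x => hg0 x
  have h := (convexOn_pow (𝕜 := ℝ) q).map_average_le (continuous_pow q).continuousOn
    isClosed_Ici hfs hfi hgi
  have havg : ∀ F : ℝ → ℝ, ⨍ x, F x ∂μ = (2 * T)⁻¹ * ∫ t in (-T)..T, F t := by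
    intro F
    rw [average_eq, measureReal_def, hμuniv, ENNReal.toReal_ofReal (by positivity), smul_eq_mul,
      intervalIntegral.integral_of_le (by linarith)]
  rw [havg, havg] at h
  exact h


theorem aux_meansq {N : ℕ} (φ a : Fin N → ℝ) (ha : ∀ n, 0 ≤ a n) {T : ℝ} (hT : 0 < T) :
    T * (∑ n, (a n) ^ 2) ≤
      ∫ t in (-T)..T, ‖∑ n, (a n : ℂ) * Complex.exp (Complex.I * t * φ n)‖ ^ 2 := by
  set f : ℝ → ℂ := fun t => ∑ n, (a n : ℂ) * Complex.exp (Complex.I * t * φ n) with hf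
  have hfc : Continuous f := by
    apply continuous_finset_sum
    intro n _
    exact continuous_const.mul (Complex.continuous_exp.comp (by fun_prop))
  set g : ℝ → ℝ := fun t => ‖f t‖ ^ 2 with hg
  have hgc : Continuous g := (hfc.norm).pow 2
  have hg0 : ∀ t, 0 ≤ g t := fun t => by positivity
  set d : Fin N → Fin N → ℂ :=
    fun m n => ∫ u in (0:ℝ)..T, Complex.exp (Complex.I * u * (φ m - φ n)) with hd
  have hEc : ∀ θ : ℝ, Continuous fun u : ℝ => Complex.exp (Complex.I * u * θ) := by
    intro θ; exact Complex.continuous_exp.comp (by fun_prop)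
  have hd_diag : ∀ n, d n n = (T : ℂ) := by
    intro n
    simp [hd]
  have hconjint : ∀ (F : ℝ → ℂ) (x y : ℝ),
      (∫ u in x..y, (starRingEnd ℂ) (F u)) = (starRingEnd ℂ) (∫ u in x..y, F u) := by
    intros F x y
    simp only [intervalIntegral, _root_.integral_conj, map_sub]
  have hd_conj : ∀ m n, d n m = (starRingEnd ℂ) (d m n) := by
    intro m n
    simp only [hd]
    rw [← hconjint]
    apply intervalIntegral.integral_congr
    intro u _
    simp only
    rw [← Complex.exp_conj]
    congr 1
    simp only [map_mul, map_sub, map_add, map_neg, Complex.conj_I, Complex.conj_ofReal]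
    ring
  have hexp : ∀ u v : ℝ, f (u - v) * (starRingEnd ℂ) (f (u - v)) =
      ∑ m, ∑ n, ((a m * a n : ℝ) : ℂ) *
        (Complex.exp (Complex.I * v * (φ n - φ m)) * Complex.exp (Complex.I * u * (φ m - φ n))) := by
    intro u v
    simp only [hf, map_sum, map_mul, Complex.conj_ofReal, ← Complex.exp_conj, map_sub,
      Complex.conj_I, Finset.sum_mul_sum]
    apply Finset.sum_congr rfl; intro m _; apply Finset.sum_congr rfl; intro n _
    rw [mul_mul_mul_comm, ← Complex.exp_add, ← Complex.exp_add]
    congr 1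
    · push_cast; ring
    · congr 1
      push_cast
      ring
  have hinner : ∀ v : ℝ, (∫ u in (0:ℝ)..T, f (u - v) * (starRingEnd ℂ) (f (u - v))) =
      ∑ m, ∑ n, ((a m * a n : ℝ) : ℂ) * Complex.exp (Complex.I * v * (φ n - φ m)) * d m n := by
    intro v
    simp_rw [hexp _ v, ← mul_assoc]
    rw [intervalIntegral.integral_finset_sum]
    · apply Finset.sum_congr rfl; intro m _
      rw [intervalIntegral.integral_finset_sum]
      · apply Finset.sum_congr rfl; intro n _
        rw [intervalIntegral.integral_const_mul]
      · intro n _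
        apply Continuous.intervalIntegrable
        exact continuous_const.mul (Complex.continuous_exp.comp (by fun_prop))
    · intro m _
      apply Continuous.intervalIntegrable
      apply continuous_finset_sum
      intro n _
      exact continuous_const.mul (Complex.continuous_exp.comp (by fun_prop))
  have houter : (∫ v in (0:ℝ)..T, ∫ u in (0:ℝ)..T, f (u - v) * (starRingEnd ℂ) (f (u - v))) =
      ∑ m, ∑ n, ((a m * a n : ℝ) : ℂ) * (d m n * (starRingEnd ℂ) (d m n)) := by
    simp_rw [hinner]
    rw [intervalIntegral.integral_finset_sum]
    · apply Finset.sum_congr rfl; intro m _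
      rw [intervalIntegral.integral_finset_sum]
      · apply Finset.sum_congr rfl; intro n _
        have hre : (fun v : ℝ => ((a m * a n : ℝ) : ℂ) * Complex.exp (Complex.I * v * (φ n - φ m)) * d m n)
            = fun v : ℝ => (((a m * a n : ℝ) : ℂ) * d m n) * Complex.exp (Complex.I * v * (φ n - φ m)) := by
          funext v; ring
        rw [hre, intervalIntegral.integral_const_mul,
          show (∫ v in (0:ℝ)..T, Complex.exp (Complex.I * v * (φ n - φ m))) = d n m from rfl,
          hd_conj m n, mul_assoc]
      · intro n _
        apply Continuous.intervalIntegrable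
        exact (continuous_const.mul (Complex.continuous_exp.comp (by fun_prop))).mul continuous_const
    · intro m _
      apply Continuous.intervalIntegrable
      apply continuous_finset_sum
      intro n _
      exact (continuous_const.mul (Complex.continuous_exp.comp (by fun_prop))).mul continuous_const
  have hg2 : ∀ t : ℝ, ((g t : ℝ) : ℂ) = f t * (starRingEnd ℂ) (f t) := by
    intro t
    rw [Complex.mul_conj]
    norm_cast
    simp [hg, Complex.normSq_eq_norm_sq]
  have hreald : (∫ v in (0:ℝ)..T, ∫ u in (0:ℝ)..T, g (u - v)) =
      ∑ m, ∑ n, a m * a n * Complex.normSq (d m n) := by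
    have h1 : ((∫ v in (0:ℝ)..T, ∫ u in (0:ℝ)..T, g (u - v) : ℝ) : ℂ)
        = ∫ v in (0:ℝ)..T, ∫ u in (0:ℝ)..T, f (u - v) * (starRingEnd ℂ) (f (u - v)) := by
      rw [← intervalIntegral.integral_ofReal]
      apply intervalIntegral.integral_congr; intro v _
      simp only
      rw [← intervalIntegral.integral_ofReal]
      apply intervalIntegral.integral_congr; intro u _
      simp only
      exact hg2 _
    rw [houter] at h1
    have h2 : (∑ m, ∑ n, ((a m * a n : ℝ) : ℂ) * (d m n * (starRingEnd ℂ) (d m n)))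
        = ((∑ m, ∑ n, a m * a n * Complex.normSq (d m n) : ℝ) : ℂ) := by
      push_cast
      apply Finset.sum_congr rfl; intro m _; apply Finset.sum_congr rfl; intro n _
      rw [Complex.mul_conj]
    rw [h2] at h1
    exact_mod_cast h1
  have hdiag_le : T ^ 2 * ∑ n, (a n) ^ 2 ≤ ∑ m, ∑ n, a m * a n * Complex.normSq (d m n) := by
    rw [Finset.mul_sum]
    apply Finset.sum_le_sum
    intro m _
    have h0 : T ^ 2 * (a m) ^ 2 = a m * a m * Complex.normSq (d m m) := by
      rw [hd_diag m, Complex.normSq_ofReal]; ring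
    rw [h0]
    exact Finset.single_le_sum (f := fun n => a m * a n * Complex.normSq (d m n))
      (fun n _ => mul_nonneg (mul_nonneg (ha m) (ha n)) (Complex.normSq_nonneg _))
      (Finset.mem_univ m)
  have hG : Continuous fun x : ℝ => ∫ t in (0:ℝ)..x, g t :=
    intervalIntegral.continuous_primitive (fun a b => hgc.intervalIntegrable a b) 0
  have hshift : ∀ v : ℝ, (∫ u in (0:ℝ)..T, g (u - v)) = ∫ t in (-v)..(T - v), g t := by
    intro v
    rw [intervalIntegral.integral_comp_sub_right (fun t => g t) v, zero_sub]
  have hcontv : Continuous fun v : ℝ => ∫ u in (0:ℝ)..T, g (u - v) := by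
    have heq : (fun v : ℝ => ∫ u in (0:ℝ)..T, g (u - v))
        = fun v : ℝ => (∫ t in (0:ℝ)..(T - v), g t) - ∫ t in (0:ℝ)..(-v), g t := by
      funext v
      rw [hshift v, intervalIntegral.integral_interval_sub_left (hgc.intervalIntegrable _ _)
        (hgc.intervalIntegrable _ _)]
    rw [heq]
    exact (hG.comp (continuous_const.sub continuous_id)).sub (hG.comp continuous_neg)
  have hdouble_le : (∫ v in (0:ℝ)..T, ∫ u in (0:ℝ)..T, g (u - v))
      ≤ T * ∫ t in (-T)..T, g t := by
    have hTM : (∫ _v in (0:ℝ)..T, (∫ t in (-T)..T, g t)) = T * ∫ t in (-T)..T, g t := by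
      rw [intervalIntegral.integral_const, sub_zero, smul_eq_mul]
    rw [← hTM]
    apply intervalIntegral.integral_mono_on (le_of_lt hT) (hcontv.intervalIntegrable 0 T)
      intervalIntegrable_const
    intro v hv
    rw [hshift v]
    exact intervalIntegral.integral_mono_interval (by linarith [hv.2]) (by linarith [hT.le])
      (by linarith [hv.1]) (Filter.Eventually.of_forall fun t => hg0 t)
      (hgc.intervalIntegrable _ _)
  have hfinal : T ^ 2 * ∑ n, (a n) ^ 2 ≤ T * ∫ t in (-T)..T, g t :=
    le_trans (hreald ▸ hdiag_le) hdouble_le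
  show T * (∑ n, (a n) ^ 2) ≤ ∫ t in (-T)..T, g t
  have h' : T * (T * ∑ n, (a n) ^ 2) ≤ T * ∫ t in (-T)..T, g t := by
    calc T * (T * ∑ n, (a n) ^ 2) = T ^ 2 * ∑ n, (a n) ^ 2 := by ring
    _ ≤ T * ∫ t in (-T)..T, g t := hfinal
  exact le_of_mul_le_mul_left h' hT


theorem stmt_18 (q : ℕ) (hq : 0 < q) :
    ∃ c : ℝ, 0 < c ∧ ∀ (N : ℕ) (φ : Fin N → ℝ) (a : Fin N → ℝ),
      (∀ n, 0 ≤ a n) → ∀ T : ℝ, 0 < T →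
      c * (∑ n, (a n) ^ 2) ^ q ≤
          (3 / (2 * T)) *
            ∫ t in (-T)..T, ‖∑ n, (a n : ℂ) * Complex.exp (Complex.I * t * φ n)‖ ^ (2 * q) ∧
        ∀ A B : ℝ, A ≤ -T → T ≤ B →
          c * (∑ n, (a n) ^ 2) ^ q ≤
            (3 / (2 * T)) *
              ∫ t in A..B, ‖∑ n, (a n : ℂ) * Complex.exp (Complex.I * t * φ n)‖ ^ (2 * q) := by
  refine ⟨(1 / 2 : ℝ) ^ q, by positivity, ?_⟩
  intro N φ a ha T hT
  have hfc : Continuous fun t : ℝ => ∑ n, (a n : ℂ) * Complex.exp (Complex.I * t * φ n) := by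
    apply continuous_finset_sum
    intro n _
    exact continuous_const.mul (Complex.continuous_exp.comp (by fun_prop))
  set g : ℝ → ℝ := fun t => ‖∑ n, (a n : ℂ) * Complex.exp (Complex.I * t * φ n)‖ ^ 2 with hg
  have hgc : Continuous g := hfc.norm.pow 2
  have hg0 : ∀ t, 0 ≤ g t := fun t => by positivity
  have h1 := aux_meansq φ a ha hT
  have h2 := aux_jensen q hT hgc hg0
  have hS : 0 ≤ ∑ n, (a n) ^ 2 := Finset.sum_nonneg fun n _ => sq_nonneg _
  have hkey : (1 / 2 : ℝ) ^ q * (∑ n, (a n) ^ 2) ^ q ≤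
      (2 * T)⁻¹ * ∫ t in (-T)..T, (g t) ^ q := by
    have h3 : (1 / 2 : ℝ) ^ q * (∑ n, (a n) ^ 2) ^ q
        = ((2 * T)⁻¹ * (T * ∑ n, (a n) ^ 2)) ^ q := by
      rw [show (2 * T)⁻¹ * (T * ∑ n, (a n) ^ 2) = (1 / 2) * ∑ n, (a n) ^ 2 by
        field_simp]
      rw [mul_pow]
    rw [h3]
    refine le_trans (pow_le_pow_left₀ (by positivity) ?_ q) h2
    exact mul_le_mul_of_nonneg_left h1 (by positivity)
  have hcongr : (∫ t in (-T)..T, (g t) ^ q)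
      = ∫ t in (-T)..T, ‖∑ n, (a n : ℂ) * Complex.exp (Complex.I * t * φ n)‖ ^ (2 * q) := by
    apply intervalIntegral.integral_congr
    intro t _
    rw [hg]
    simp only
    rw [← pow_mul]
  have hintpos : 0 ≤ ∫ t in (-T)..T, ‖∑ n, (a n : ℂ) * Complex.exp (Complex.I * t * φ n)‖ ^ (2 * q) := by
    apply intervalIntegral.integral_nonneg (by linarith)
    intro t _
    positivity
  have hfirst : (1 / 2 : ℝ) ^ q * (∑ n, (a n) ^ 2) ^ q ≤
      (3 / (2 * T)) * ∫ t in (-T)..T, ‖∑ n, (a n : ℂ) * Complex.exp (Complex.I * t * φ n)‖ ^ (2 * q) := by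
    refine le_trans hkey ?_
    rw [hcongr]
    apply mul_le_mul_of_nonneg_right _ hintpos
    rw [div_eq_mul_inv]
    nlinarith [inv_nonneg.2 (by positivity : (0:ℝ) ≤ 2 * T)]
  refine ⟨hfirst, ?_⟩
  intro A B hA hB
  refine le_trans hfirst ?_
  apply mul_le_mul_of_nonneg_left _ (by positivity)
  apply intervalIntegral.integral_mono_interval hA (by linarith) hB
    (Filter.Eventually.of_forall fun t => by positivity)
  exact ((hfc.norm.pow (2 * q)).intervalIntegrable A B)
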